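/- Let I be a compact interval, f : I → I a continuous map, and let Orb(J_0) ⊇ Orb(J_1) ⊇ … be a nested sequence of cycles of intervals for f whose periods tend to infinity. Set Q = ⋂_n Orb(J_n). If x ∈ I is a point with α(x) ∩ Q ≠ ∅, then x ∈ Q. -/

import Mathlib

open Filter Topology

/-- `g` is a backward orbit branch for `f`: `f (g (n+1)) = g n` for all `n`. -/
def IsBackwardBranch {X : Type*} (f : X → X) (g : ℕ → X) : Prop :=
  ∀ n : ℕ, f (g (n + 1)) = g n

/-- `g` is a preimage sequence of `x` for `f`: `f^[n] (g n) = x` for all `n`. -/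
def IsPreimageSeq {X : Type*} (f : X → X) (x : X) (g : ℕ → X) : Prop :=
  ∀ n : ℕ, f^[n] (g n) = x

/-- The set of limit points of a sequence `g`. -/
def limitPts {X : Type*} [TopologicalSpace X] (g : ℕ → X) : Set X :=
  {y | ∃ φ : ℕ → ℕ, StrictMono φ ∧ Filter.Tendsto (fun i => g (φ i)) Filter.atTop (nhds y)}

/-- The ω-limit set of a point `x`. -/
def omegaSet {X : Type*} [TopologicalSpace X] (f : X → X) (x : X) : Set X :=
  limitPts fun n => f^[n] x

/-- The α-limit set of a point `x`: limit points of preimage sequences of `x`. -/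
def alphaSet {X : Type*} [TopologicalSpace X] (f : X → X) (x : X) : Set X :=
  {y | ∃ g : ℕ → X, IsPreimageSeq f x g ∧ y ∈ limitPts g}

/-- The special α-limit set of a point `x`: limit points of backward orbit branches of `x`. -/
def sAlphaSet {X : Type*} [TopologicalSpace X] (f : X → X) (x : X) : Set X :=
  {y | ∃ g : ℕ → X, g 0 = x ∧ IsBackwardBranch f g ∧ y ∈ limitPts g}

/-- `A(f)`: the union of the α-limit sets of all points. -/
def bigA {X : Type*} [TopologicalSpace X] (f : X → X) : Set X := ⋃ x, alphaSet f x

/-- `SA(f)`: the union of the special α-limit sets of all points. -/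
def bigSA {X : Type*} [TopologicalSpace X] (f : X → X) : Set X := ⋃ x, sAlphaSet f x

/-- `ω(f)`: the union of the ω-limit sets of all points. -/
def omegaUnion {X : Type*} [TopologicalSpace X] (f : X → X) : Set X := ⋃ x, omegaSet f x

/-- The set of recurrent points of `f`. -/
def recPts {X : Type*} [TopologicalSpace X] (f : X → X) : Set X :=
  {x | ∀ U ∈ nhds x, ∃ n : ℕ, 1 ≤ n ∧ f^[n] x ∈ U}

/-- The set of non-wandering points of `f`. -/
def nwPts {X : Type*} [TopologicalSpace X] (f : X → X) : Set X :=
  {x | ∀ U ∈ nhds x, ∃ n : ℕ, 1 ≤ n ∧ (f^[n] '' U ∩ U).Nonempty}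

/-- The set of periodic points of `f`. -/
def perPts {X : Type*} (f : X → X) : Set X :=
  {p | ∃ k : ℕ, 1 ≤ k ∧ f^[k] p = p}

theorem alpha_meets_solenoid_imp_mem {a b : ℝ} (hab : a ≤ b) (f : Set.Icc a b → Set.Icc a b)
    (hf : Continuous f) (J : ℕ → Set (Set.Icc a b)) (p : ℕ → ℕ)
    (hJ : ∀ n : ℕ, ∃ c d : Set.Icc a b, c ≤ d ∧ J n = Set.Icc c d)
    (hp : ∀ n : ℕ, 1 ≤ p n)
    (hinv : ∀ n : ℕ, f^[p n] '' J n ⊆ J n)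
    (hdisj : ∀ n : ℕ, ∀ i < p n, ∀ j < p n, i ≠ j → Disjoint (f^[i] '' J n) (f^[j] '' J n))
    (Orb : ℕ → Set (Set.Icc a b))
    (hOrb : ∀ n : ℕ, Orb n = ⋃ i ∈ Finset.range (p n), f^[i] '' J n)
    (hnest : ∀ n : ℕ, Orb (n + 1) ⊆ Orb n)
    (hperiods : Filter.Tendsto p Filter.atTop Filter.atTop)
    (Q : Set (Set.Icc a b)) (hQ : Q = ⋂ n : ℕ, Orb n)
    (x : Set.Icc a b) (hx : (alphaSet f x ∩ Q).Nonempty) :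
    x ∈ Q := by
  classical
  haveI : Fact (a ≤ b) := ⟨hab⟩
  obtain ⟨y, hyA, hyQ⟩ := hx
  obtain ⟨g, hg, φ, hφ, hlim⟩ := hyA
  rw [hQ, Set.mem_iInter] at hyQ
  -- `f^[k] '' J n ⊆ f^[k % p n] '' J n`
  have hmod : ∀ n k, f^[k] '' J n ⊆ f^[k % p n] '' J n := by
    intro n k
    induction k using Nat.strong_induction_on with
    | _ k ih =>
      rcases lt_or_ge k (p n) with hk | hk
      · rw [Nat.mod_eq_of_lt hk]
      · have h1 : f^[k] '' J n ⊆ f^[k - p n] '' J n := by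
          have hk' : f^[k] '' J n = f^[k - p n] '' (f^[p n] '' J n) := by
            rw [← Set.image_comp, ← Function.iterate_add, Nat.sub_add_cancel hk]
          rw [hk']
          exact Set.image_mono (hinv n)
        have h2 := ih (k - p n) (by have := hp n; omega)
        rw [Nat.mod_eq_sub_mod hk]
        exact h1.trans h2
  -- membership in `Orb n` described via components
  have horb : ∀ n, ∀ z ∈ Orb n, ∃ k, k < p n ∧ z ∈ f^[k] '' J n := by
    intro n z hz
    rw [hOrb n] at hz
    obtain ⟨k, hk, hzk⟩ := Set.mem_iUnion₂.1 hz
    exact ⟨k, Finset.mem_range.1 hk, hzk⟩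
  have horb' : ∀ n k (w : Set.Icc a b), w ∈ J n → f^[k] w ∈ Orb n := by
    intro n k w hw
    rw [hOrb n]
    refine Set.mem_iUnion₂.2 ⟨k % p n, Finset.mem_range.2 (Nat.mod_lt _ (hp n)), ?_⟩
    exact hmod n k (Set.mem_image_of_mem _ hw)
  -- forward invariance of each `Orb n`
  have hfwd : ∀ n N, ∀ z ∈ Orb n, f^[N] z ∈ Orb n := by
    intro n N z hz
    obtain ⟨k, _, w, hw, rfl⟩ := horb n z hz
    rw [← Function.iterate_add_apply]
    exact horb' n (N + k) w hw
  -- suppose `x ∉ Q`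
  by_contra hxQ
  rw [hQ, Set.mem_iInter] at hxQ
  push_neg at hxQ
  obtain ⟨n, hn⟩ := hxQ
  -- preimages of `x` avoid `Orb n`
  have hpre : ∀ j N, N ≤ j → f^[N] (g j) ∉ Orb n := by
    intro j N hN hmem
    apply hn
    have h1 := hfwd n (j - N) _ hmem
    rwa [← Function.iterate_add_apply, Nat.sub_add_cancel hN, hg j] at h1
  -- every forward image of `y` is in the closure of the complement of `Orb n`
  have hcl : ∀ N : ℕ, f^[N] y ∈ closure ((Orb n)ᶜ) := by
    intro N
    have h1 : Filter.Tendsto (fun i => f^[N] (g (φ i))) Filter.atTop (nhds (f^[N] y)) :=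
      ((hf.iterate N).tendsto y).comp hlim
    refine mem_closure_of_tendsto h1 ?_
    filter_upwards [Filter.eventually_ge_atTop N] with i hi
    exact hpre (φ i) N (hi.trans (hφ.le_apply))
  -- hence every forward image of `y` is an endpoint of a component
  have hends : ∀ N : ℕ, ∃ k, k < p n ∧
      (f^[N] y = sInf (f^[k] '' J n) ∨ f^[N] y = sSup (f^[k] '' J n)) := by
    intro N
    obtain ⟨k, hk, hz⟩ := horb n _ (hfwd n N y (hyQ n))
    refine ⟨k, hk, ?_⟩
    obtain ⟨c, d, hcd, hJn⟩ := hJ n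
    have hconn : IsConnected (f^[k] '' J n) := by
      rw [hJn]
      exact ⟨(Set.nonempty_Icc.2 hcd).image _,
        isPreconnected_Icc.image _ (hf.iterate k).continuousOn⟩
    have hcomp : IsCompact (f^[k] '' J n) := by
      rw [hJn]
      exact isCompact_Icc.image (hf.iterate k)
    have heq := eq_Icc_of_connected_compact hconn hcomp
    by_contra hne
    push_neg at hne
    have hmem' : f^[N] y ∈ Set.Icc (sInf (f^[k] '' J n)) (sSup (f^[k] '' J n)) := heq ▸ hz
    have hlt1 : sInf (f^[k] '' J n) < f^[N] y := lt_of_le_of_ne hmem'.1 (Ne.symm hne.1)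
    have hlt2 : f^[N] y < sSup (f^[k] '' J n) := lt_of_le_of_ne hmem'.2 hne.2
    obtain ⟨w, hwo, hwc⟩ := (mem_closure_iff.1 (hcl N)) _ isOpen_Ioo ⟨hlt1, hlt2⟩
    apply hwc
    have hwS : w ∈ f^[k] '' J n := by
      rw [heq]; exact Set.Ioo_subset_Icc_self hwo
    rw [hOrb n]
    exact Set.mem_iUnion₂.2 ⟨k, Finset.mem_range.2 hk, hwS⟩
  -- pigeonhole: the forward orbit of `y` lies in a finite set
  have hEfin : (⋃ k ∈ Finset.range (p n),
      ({sInf (f^[k] '' J n), sSup (f^[k] '' J n)} : Set (Set.Icc a b))).Finite :=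
    Set.Finite.biUnion (Finset.range (p n)).finite_toSet
      (fun k _ => (Set.finite_singleton _).insert _)
  have hmaps : Set.MapsTo (fun N => f^[N] y) Set.univ
      (⋃ k ∈ Finset.range (p n),
        ({sInf (f^[k] '' J n), sSup (f^[k] '' J n)} : Set (Set.Icc a b))) := by
    intro N _
    obtain ⟨k, hk, hor⟩ := hends N
    exact Set.mem_iUnion₂.2 ⟨k, Finset.mem_range.2 hk, by
      rcases hor with h | h
      · exact Set.mem_insert_iff.2 (Or.inl h)
      · exact Set.mem_insert_iff.2 (Or.inr (Set.mem_singleton_iff.2 h))⟩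
  obtain ⟨N1, -, N2, -, hNe, hEq12⟩ :=
    Set.infinite_univ.exists_ne_map_eq_of_mapsTo hmaps hEfin
  obtain ⟨N₁, N₂, hlt, hEq⟩ : ∃ N₁ N₂, N₁ < N₂ ∧ f^[N₁] y = f^[N₂] y := by
    rcases hNe.lt_or_gt with h | h
    · exact ⟨N1, N2, h, hEq12⟩
    · exact ⟨N2, N1, h, hEq12.symm⟩
  -- take a cycle with period larger than `N₂`
  obtain ⟨m, hm⟩ := (hperiods.eventually_ge_atTop (N₂ + 1)).exists
  obtain ⟨k0, hk0, w, hw, hwy⟩ := horb m y (hyQ m)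
  have hmem : ∀ N : ℕ, f^[N] y ∈ f^[(N + k0) % p m] '' J m := by
    intro N
    apply hmod m (N + k0)
    rw [← hwy, ← Function.iterate_add_apply]
    exact Set.mem_image_of_mem _ hw
  have hr1 : (N₁ + k0) % p m < p m := Nat.mod_lt _ (hp m)
  have hr2 : (N₂ + k0) % p m < p m := Nat.mod_lt _ (hp m)
  rcases eq_or_ne ((N₁ + k0) % p m) ((N₂ + k0) % p m) with hr | hr
  · have hdvd : p m ∣ (N₂ + k0) - (N₁ + k0) := (Nat.modEq_iff_dvd' (by omega)).1 hr
    have := Nat.le_of_dvd (by omega) hdvd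
    omega
  · have h1 := hmem N₁
    have h2 := hmem N₂
    rw [← hEq] at h2
    exact Set.disjoint_left.1 (hdisj m _ hr1 _ hr2 hr) h1 h2
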